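/- Let g be a symmetric 4×4 real matrix, ζ ∈ ℝ⁴ and W ∈ ℝ⁴ with Ω² = 1 + ζᵀW > 0. Then det(T(ζ, W, g)) = Ω⁴ · det(g). -/

import Mathlib

open Matrix

/-- The transformation `T(ζ, W, g) = Ω²·g − (gζ)Wᵀ − W(gζ)ᵀ − (λ/Ω²)·W Wᵀ`
with `Ω² = 1 + ζᵀW` and `λ = −ζᵀgζ`. -/
noncomputable def ehlersT {n : ℕ} (ζ W : Fin n → ℝ) (g : Matrix (Fin n) (Fin n) ℝ) :
    Matrix (Fin n) (Fin n) ℝ :=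
  (1 + ζ ⬝ᵥ W) • g - vecMulVec (g *ᵥ ζ) W - vecMulVec W (g *ᵥ ζ)
    - ((-(ζ ⬝ᵥ g *ᵥ ζ)) / (1 + ζ ⬝ᵥ W)) • vecMulVec W W

section aux

variable {n : ℕ}

lemma aux_vecMulVec_mul (W a : Fin n → ℝ) (g : Matrix (Fin n) (Fin n) ℝ)
    (hg : g.IsSymm) : vecMulVec W a * g = vecMulVec W (g *ᵥ a) := by
  ext i j
  simp only [Matrix.mul_apply, vecMulVec_apply, Matrix.mulVec, dotProduct]
  rw [Finset.mul_sum]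
  refine Finset.sum_congr rfl fun k _ => ?_
  rw [hg.apply j k]; ring

lemma aux_mul_vecMulVec (a W : Fin n → ℝ) (g : Matrix (Fin n) (Fin n) ℝ) :
    g * vecMulVec a W = vecMulVec (g *ᵥ a) W := by
  ext i j
  simp only [Matrix.mul_apply, vecMulVec_apply, Matrix.mulVec, dotProduct,
    Finset.sum_mul]
  refine Finset.sum_congr rfl fun k _ => ?_
  ring

lemma aux_vecMulVec_mul_vecMulVec (W a b v : Fin n → ℝ) :
    vecMulVec W a * vecMulVec b v = (a ⬝ᵥ b) • vecMulVec W v := by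
  ext i j
  simp only [Matrix.mul_apply, vecMulVec_apply, Matrix.smul_apply, dotProduct,
    smul_eq_mul, Finset.sum_mul, Finset.mul_sum]
  refine Finset.sum_congr rfl fun k _ => ?_
  ring

lemma aux_transpose_vecMulVec (a b : Fin n → ℝ) :
    (vecMulVec a b)ᵀ = vecMulVec b a := by
  ext i j
  simp [vecMulVec_apply, mul_comm]

end aux

lemma ehlersT_factor (g : Matrix (Fin 4) (Fin 4) ℝ) (hg : g.IsSymm)
    (ζ W : Fin 4 → ℝ) (hΩ : (1 + ζ ⬝ᵥ W) ≠ 0) :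
    ehlersT ζ W g = (1 + ζ ⬝ᵥ W) •
      ((1 - (1 + ζ ⬝ᵥ W)⁻¹ • vecMulVec W ζ) * g *
        (1 - (1 + ζ ⬝ᵥ W)⁻¹ • vecMulVec W ζ)ᵀ) := by
  set c : ℝ := (1 + ζ ⬝ᵥ W)⁻¹ with hc
  have key : (1 - c • vecMulVec W ζ) * g * (1 - c • vecMulVec W ζ)ᵀ
      = g - c • vecMulVec (g *ᵥ ζ) W - c • vecMulVec W (g *ᵥ ζ)
        + (c * c * (ζ ⬝ᵥ g *ᵥ ζ)) • vecMulVec W W := by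
    rw [transpose_sub, transpose_one, transpose_smul, aux_transpose_vecMulVec]
    rw [sub_mul, one_mul, Matrix.smul_mul, aux_vecMulVec_mul W ζ g hg,
      Matrix.mul_sub, Matrix.mul_one, Matrix.mul_smul, Matrix.sub_mul,
      aux_mul_vecMulVec ζ W g, Matrix.smul_mul, aux_vecMulVec_mul_vecMulVec]
    have hd : (g *ᵥ ζ) ⬝ᵥ ζ = ζ ⬝ᵥ g *ᵥ ζ := dotProduct_comm _ _
    rw [hd]
    module
  rw [key]
  ext i j
  have h1 : (1 + ζ ⬝ᵥ W) * c = 1 := mul_inv_cancel₀ hΩ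
  simp only [ehlersT, Matrix.smul_apply, Matrix.sub_apply, Matrix.add_apply,
    vecMulVec_apply, smul_eq_mul, hc]
  field_simp
  ring
/-- **Determinant of the transformed metric:** for a symmetric `4 × 4` real matrix `g`
and `Ω² = 1 + ζᵀW > 0`, one has `det (T(ζ, W, g)) = Ω⁴ · det g`. -/
theorem ehlersT_det (g : Matrix (Fin 4) (Fin 4) ℝ) (hg : g.IsSymm)
    (ζ W : Fin 4 → ℝ) (hΩ : 0 < 1 + ζ ⬝ᵥ W) :
    (ehlersT ζ W g).det = (1 + ζ ⬝ᵥ W) ^ 2 * g.det := by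
  have hne : (1 + ζ ⬝ᵥ W) ≠ 0 := ne_of_gt hΩ
  set c : ℝ := (1 + ζ ⬝ᵥ W)⁻¹ with hc
  rw [ehlersT_factor g hg ζ W hne]
  have hQ : ((1 : Matrix (Fin 4) (Fin 4) ℝ) - c • vecMulVec W ζ).det = c := by
    have h1 : (1 : Matrix (Fin 4) (Fin 4) ℝ) - c • vecMulVec W ζ
        = 1 + vecMulVec ((-c) • W) ζ := by
      ext i j
      simp [vecMulVec_apply, mul_comm]
      ring
    rw [h1, vecMulVec_eq (Fin 1), det_one_add_replicateCol_mul_replicateRow]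
    simp only [dotProduct_smul, smul_eq_mul, neg_mul, hc]
    field_simp
    ring
  rw [Matrix.det_smul, Matrix.det_mul, Matrix.det_mul, Matrix.det_transpose, hQ]
  have h1 : (1 + ζ ⬝ᵥ W) * c = 1 := mul_inv_cancel₀ hne
  simp only [Fintype.card_fin, hc]
  field_simp
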